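/- Let G be a graph, A ⊆ V(G), and R' ⊆ V(G)\A. Suppose X ⊆ A and Y ⊆ V(G)\A with Y ≡_{V(G)\A}^2 R', and suppose G[X ∪ Y] is a tree. Then for any two distinct vertices a, b ∈ X each having at least two neighbors in R', we have N(a) ∩ (V(G)\A) ≠ N(b) ∩ (V(G)\A). -/

import Mathlib

/-- `X` and `Y` are `d`-neighbor equivalent over `A` in `G`. -/
def nequiv {V : Type*} [Fintype V] [DecidableEq V] (G : SimpleGraph V) [DecidableRel G.Adj]
    (d : ℕ) (A X Y : Finset V) : Prop :=
  ∀ u ∉ A, min d (G.neighborFinset u ∩ X).card = min d (G.neighborFinset u ∩ Y).card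

/-- If `Y ≡_{Ā}^2 R'` and `G[X ∪ Y]` is a tree, then any two distinct vertices of `X`
each having at least two neighbors in `R'` have different neighborhoods in `Ā`. -/
theorem neighborhoods_distinct_of_tree {V : Type*} [Fintype V] [DecidableEq V]
    (G : SimpleGraph V) [DecidableRel G.Adj] (A X Y R' : Finset V)
    (hX : X ⊆ A) (hY : Y ⊆ Aᶜ) (hR' : R' ⊆ Aᶜ)
    (heq : nequiv G 2 Aᶜ Y R')
    (htree : (G.induce ((X ∪ Y : Finset V) : Set V)).IsTree)
    (a b : V) (ha : a ∈ X) (hb : b ∈ X) (hab : a ≠ b)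
    (ha2 : 2 ≤ (G.neighborFinset a ∩ R').card)
    (hb2 : 2 ≤ (G.neighborFinset b ∩ R').card) :
    G.neighborFinset a ∩ Aᶜ ≠ G.neighborFinset b ∩ Aᶜ := by
  intro hne
  -- a has ≥ 2 neighbors in Y
  have haA : a ∉ Aᶜ := by simp [hX ha]
  have hYa : 2 ≤ (G.neighborFinset a ∩ Y).card := by
    have := heq a haA; omega
  -- neighbors of a in Y = neighbors of b in Y
  have hsame : G.neighborFinset a ∩ Y = G.neighborFinset b ∩ Y := by
    ext y
    simp only [Finset.mem_inter, SimpleGraph.mem_neighborFinset]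
    constructor
    · rintro ⟨hay, hyY⟩
      have : y ∈ G.neighborFinset b ∩ Aᶜ := by
        rw [← hne]; simp [hay, hY hyY]
      simp only [Finset.mem_inter, SimpleGraph.mem_neighborFinset] at this
      exact ⟨this.1, hyY⟩
    · rintro ⟨hby, hyY⟩
      have : y ∈ G.neighborFinset a ∩ Aᶜ := by
        rw [hne]; simp [hby, hY hyY]
      simp only [Finset.mem_inter, SimpleGraph.mem_neighborFinset] at this
      exact ⟨this.1, hyY⟩
  obtain ⟨y₁, hy₁, y₂, hy₂, hyne⟩ := Finset.one_lt_card.mp (by omega : 1 < (G.neighborFinset a ∩ Y).card)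
  have hy₁' := hsame ▸ hy₁
  have hy₂' := hsame ▸ hy₂
  simp only [Finset.mem_inter, SimpleGraph.mem_neighborFinset] at hy₁ hy₂ hy₁' hy₂'
  -- memberships in X ∪ Y
  set S : Set V := ((X ∪ Y : Finset V) : Set V) with hS
  have maS : a ∈ S := by simp [hS, ha]
  have mbS : b ∈ S := by simp [hS, hb]
  have my₁ : y₁ ∈ S := by simp [hS, hy₁.2]
  have my₂ : y₂ ∈ S := by simp [hS, hy₂.2]
  set a' : S := ⟨a, maS⟩
  set b' : S := ⟨b, mbS⟩
  set z₁ : S := ⟨y₁, my₁⟩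
  set z₂ : S := ⟨y₂, my₂⟩
  have had1 : (G.induce S).Adj a' z₁ := hy₁.1
  have had2 : (G.induce S).Adj a' z₂ := hy₂.1
  have hbd1 : (G.induce S).Adj z₁ b' := (hy₁'.1).symm
  have hbd2 : (G.induce S).Adj z₂ b' := (hy₂'.1).symm
  let p₁ : (G.induce S).Walk a' b' :=
    SimpleGraph.Walk.cons had1 (SimpleGraph.Walk.cons hbd1 SimpleGraph.Walk.nil)
  let p₂ : (G.induce S).Walk a' b' :=
    SimpleGraph.Walk.cons had2 (SimpleGraph.Walk.cons hbd2 SimpleGraph.Walk.nil)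
  have hp₁ : p₁.IsPath := by
    simp [p₁, SimpleGraph.Walk.isPath_def]
    rw [Subtype.ext_iff, Subtype.ext_iff, Subtype.ext_iff]
    exact ⟨⟨hy₁.1.ne, hab⟩, hy₁'.1.ne'⟩
  have hp₂ : p₂.IsPath := by
    simp [p₂, SimpleGraph.Walk.isPath_def]
    rw [Subtype.ext_iff, Subtype.ext_iff, Subtype.ext_iff]
    exact ⟨⟨hy₂.1.ne, hab⟩, hy₂'.1.ne'⟩
  have := (htree.existsUnique_path a' b').unique hp₁ hp₂
  have hsup : p₁.support = p₂.support := by rw [this]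
  simp [p₁, p₂, SimpleGraph.Walk.support_cons] at hsup
  exact hyne (Subtype.ext_iff.mp hsup)
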